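/- arXiv:1406.7860 — 2 statements merged into one kernel-verified Lean document; each statement's English description precedes it below -/
import Mathlib

section
/- Let n ≥ 1, let β be a function assigning a rational number to every 0-1 word of length n that satisfies the dual Bayer–Billera relations, and define α by α_F = Σ_{E ≤ F} β_E for all 0-1 words F of length n. Then α satisfies the Bayer–Billera relations. -/
/-- `chk E` is the word `E` with its last letter flipped (`chk [] = []`). -/
def chk : List Bool → List Bool
  | [] => []
  | [b] => [!b]
  | b :: c :: rest => b :: chk (c :: rest)

/-- `comp E` is the complementary word, with every letter flipped. -/
def comp (E : List Bool) : List Bool := E.map (!·)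

/-- `Eij i j` is the word `0^(i-1) 1 0^(j-i)`. -/
def Eij (i j : ℕ) : List Bool :=
  List.replicate (i - 1) false ++ [true] ++ List.replicate (j - i) false

/-- The word `0^j`. -/
def zeros (j : ℕ) : List Bool := List.replicate j false

/-- The word `1^j`. -/
def ones (j : ℕ) : List Bool := List.replicate j true

/-- `β` satisfies the dual Bayer–Billera relations (for words of length `n`). -/
def DualBB (n : ℕ) (β : List Bool → ℚ) : Prop :=
  ∀ E F : List Bool, E.length + F.length = n →
    β (E ++ F) + β (chk E ++ F) = β (E ++ comp F) + β (chk E ++ comp F)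

/-- `α` satisfies the Bayer–Billera relations (for words of length `n`). -/
def BB (n : ℕ) (α : List Bool → ℚ) : Prop :=
  ∀ (j : ℕ) (E F : List Bool), 1 ≤ j →
    (E = [] ∨ E.getLast? = some true) →
    (F = [] ∨ F.head? = some true) →
    E.length + j + F.length = n →
    ∑ i ∈ Finset.Icc 1 j, (-1 : ℚ) ^ (i - 1) * α (E ++ Eij i j ++ F) =
      2 * (if Odd j then 1 else 0) * α (E ++ zeros j ++ F)

/-- The finset of all 0-1 words of length `n`. -/
def allWords : ℕ → Finset (List Bool)
  | 0 => {[]}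
  | n + 1 => (allWords n).image (List.cons false) ∪ (allWords n).image (List.cons true)

/-- Pointwise order on words of equal length (`wleB E F = true` iff `E ≤ F`). -/
def wleB : List Bool → List Bool → Bool
  | [], [] => true
  | a :: E, b :: F => (!a || b) && wleB E F
  | _, _ => false

section Aux

open Finset

lemma chk_cons (a : Bool) (L : List Bool) (h : L ≠ []) : chk (a :: L) = a :: chk L := by
  cases L with
  | nil => simp at h
  | cons c r => rfl

lemma chk_append_singleton (P : List Bool) (b : Bool) : chk (P ++ [b]) = P ++ [!b] := by
  induction P with
  | nil => rfl
  | cons p P ih =>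
    rw [List.cons_append, chk_cons p (P ++ [b]) (by simp), ih, List.cons_append]

lemma comp_append (X Y : List Bool) : comp (X ++ Y) = comp X ++ comp Y :=
  List.map_append

lemma comp_zeros (m : ℕ) : comp (zeros m) = ones m := by
  simp [comp, zeros, ones]

lemma wleB_cons (a b : Bool) (E G : List Bool) :
    wleB (a :: E) (b :: G) = ((!a || b) && wleB E G) := rfl

/-- The down-set of a word, as a finset. -/
def dset : List Bool → Finset (List Bool)
  | [] => {[]}
  | false :: F => (dset F).image (List.cons false)
  | true :: F => (dset F).image (List.cons false) ∪ (dset F).image (List.cons true)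

lemma length_of_mem_dset : ∀ (G A : List Bool), A ∈ dset G → A.length = G.length := by
  intro G
  induction G with
  | nil => intro A hA; simp [dset] at hA; simp [hA]
  | cons b G ih =>
    intro A hA
    cases b
    · simp only [dset, Finset.mem_image] at hA
      obtain ⟨B, hB, rfl⟩ := hA
      simp [ih B hB]
    · simp only [dset, Finset.mem_union, Finset.mem_image] at hA
      rcases hA with ⟨B, hB, rfl⟩ | ⟨B, hB, rfl⟩ <;> simp [ih B hB]

lemma filter_wle (G : List Bool) :
    (allWords G.length).filter (fun E => wleB E G) = dset G := by
  induction G with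
  | nil =>
    simp [allWords, dset, Finset.filter_singleton, wleB]
  | cons b G ih =>
    show (allWords (G.length + 1)).filter _ = _
    rw [allWords, Finset.filter_union, Finset.filter_image, Finset.filter_image]
    cases b
    · simp only [wleB_cons, Bool.not_false, Bool.not_true, Bool.true_or, Bool.false_or,
        Bool.false_and, Bool.true_and, Bool.or_self]
      simp only [Bool.false_eq_true, Finset.filter_false, Finset.image_empty,
        Finset.union_empty]
      rw [ih]
      rfl
    · simp only [wleB_cons, Bool.or_true, Bool.true_and]
      rw [ih]
      rfl

lemma sum_image_cons (a : Bool) (S : Finset (List Bool)) (f : List Bool → ℚ) :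
    ∑ D ∈ S.image (List.cons a), f D = ∑ A ∈ S, f (a :: A) :=
  Finset.sum_image (by intro x _ y _ h; simpa using h)

lemma sum_dset_cons_true (G : List Bool) (f : List Bool → ℚ) :
    ∑ D ∈ dset (true :: G), f D = ∑ A ∈ dset G, (f (false :: A) + f (true :: A)) := by
  have hd : Disjoint ((dset G).image (List.cons false)) ((dset G).image (List.cons true)) := by
    rw [Finset.disjoint_left]
    rintro x hx hy
    simp only [Finset.mem_image] at hx hy
    obtain ⟨a, _, rfl⟩ := hx
    obtain ⟨c, _, hc⟩ := hy
    simp at hc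
  show ∑ D ∈ (dset G).image (List.cons false) ∪ (dset G).image (List.cons true), f D = _
  rw [Finset.sum_union hd, sum_image_cons, sum_image_cons, ← Finset.sum_add_distrib]

lemma sum_dset_cons_false (G : List Bool) (f : List Bool → ℚ) :
    ∑ D ∈ dset (false :: G), f D = ∑ A ∈ dset G, f (false :: A) := by
  show ∑ D ∈ (dset G).image (List.cons false), f D = _
  rw [sum_image_cons]

lemma sum_dset_append (X Y : List Bool) (f : List Bool → ℚ) :
    ∑ D ∈ dset (X ++ Y), f D = ∑ A ∈ dset X, ∑ B ∈ dset Y, f (A ++ B) := by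
  induction X generalizing f with
  | nil => simp [dset]
  | cons b X ih =>
    cases b
    · rw [List.cons_append, sum_dset_cons_false, sum_dset_cons_false,
        ih (fun D => f (false :: D))]
      simp only [List.cons_append]
    · rw [List.cons_append, sum_dset_cons_true, sum_dset_cons_true,
        Finset.sum_add_distrib, ih (fun D => f (false :: D)), ih (fun D => f (true :: D)),
        ← Finset.sum_add_distrib]
      refine Finset.sum_congr rfl fun A _ => ?_
      simp only [List.cons_append]

lemma sum_dset_rep (m : ℕ) (f : List Bool → ℚ) :
    ∑ B ∈ dset (List.replicate m false), f B = f (List.replicate m false) := by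
  induction m generalizing f with
  | zero => simp [dset]
  | succ m ih =>
    rw [List.replicate_succ, sum_dset_cons_false, ih (fun B => f (false :: B))]

lemma sum_dset_singleton_true (f : List Bool → ℚ) :
    ∑ B ∈ dset [true], f B = f [false] + f [true] := by
  rw [show ([true] : List Bool) = true :: [] from rfl, sum_dset_cons_true]
  simp [dset]

lemma sum_dset_Eij (i j : ℕ) (h1 : 1 ≤ i) (h2 : i ≤ j) (f : List Bool → ℚ) :
    ∑ B ∈ dset (Eij i j), f B = f (zeros j) + f (Eij i j) := by
  have hsplit : Eij i j
      = List.replicate (i-1) false ++ ([true] ++ List.replicate (j-i) false) := by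
    simp [Eij, List.append_assoc]
  conv_lhs => rw [hsplit]
  rw [sum_dset_append, sum_dset_rep, sum_dset_append, sum_dset_singleton_true,
    sum_dset_rep (j - i) (fun S => f (List.replicate (i-1) false ++ ([false] ++ S))),
    sum_dset_rep (j - i) (fun S => f (List.replicate (i-1) false ++ ([true] ++ S)))]
  have e0 : List.replicate (i-1) false ++ ([false] ++ List.replicate (j-i) false)
      = zeros j := by
    show _ = List.replicate j false
    conv_rhs => rw [show j = (i-1) + (1 + (j-i)) from by omega, List.replicate_add,
      List.replicate_add]
    rfl
  rw [e0, ← hsplit]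

lemma beta_comp {n : ℕ} {β : List Bool → ℚ} (hβ : DualBB n β) (G : List Bool)
    (h : G.length = n) : β G = β (comp G) := by
  have h2 := hβ [] G (by simpa using h)
  simp only [show chk [] = [] from rfl, List.nil_append] at h2
  linarith

lemma beta_flip {n : ℕ} {β : List Bool → ℚ} (hβ : DualBB n β) (P : List Bool) (b : Bool)
    (K : List Bool) (h : P.length + 1 + K.length = n) :
    β (P ++ [b] ++ K) + β (P ++ [!b] ++ K)
      = β (P ++ [b] ++ comp K) + β (P ++ [!b] ++ comp K) := by
  have h2 := hβ (P ++ [b]) K (by simp; omega)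
  rw [chk_append_singleton] at h2
  exact h2

lemma sum_left {n : ℕ} {β : List Bool → ℚ} (hβ : DualBB n β) (E F W : List Bool)
    (hE : E = [] ∨ E.getLast? = some true)
    (hlen : E.length + W.length + F.length = n) :
    ∑ A ∈ dset E, ∑ C ∈ dset F, β (A ++ W ++ C)
      = ∑ A ∈ dset E, ∑ C ∈ dset F, β (A ++ comp W ++ comp C) := by
  rcases hE with rfl | hE
  · simp only [dset, Finset.sum_singleton, List.nil_append]
    refine Finset.sum_congr rfl fun C hC => ?_
    have hC' := length_of_mem_dset F C hC
    simp only [List.length_nil] at hlen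
    have hcc := beta_comp hβ (W ++ C) (by simp only [List.length_append]; omega)
    rw [hcc, comp_append]
  · have hne : E ≠ [] := by rintro rfl; simp at hE
    obtain ⟨X, rfl⟩ : ∃ X, E = X ++ [true] := by
      refine ⟨E.dropLast, ?_⟩
      have h1 := List.dropLast_append_getLast hne
      have h2 : E.getLast hne = true := by
        rw [List.getLast?_eq_getLast hne] at hE
        exact Option.some_injective _ hE
      rw [← h2]; exact h1.symm
    rw [sum_dset_append X [true], sum_dset_append X [true]]
    refine Finset.sum_congr rfl fun P hP => ?_
    rw [sum_dset_singleton_true, sum_dset_singleton_true,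
      ← Finset.sum_add_distrib, ← Finset.sum_add_distrib]
    refine Finset.sum_congr rfl fun C hC => ?_
    have hPl := length_of_mem_dset _ _ hP
    have hCl := length_of_mem_dset _ _ hC
    have key := beta_flip hβ P false (W ++ C)
      (by simp only [List.length_append, List.length_cons, List.length_nil] at *; omega)
    simp only [comp_append, Bool.not_false, ← List.append_assoc] at key ⊢
    linarith

lemma sum_right {n : ℕ} {β : List Bool → ℚ} (hβ : DualBB n β) (E F W : List Bool)
    (hF : F = [] ∨ F.head? = some true)
    (hlen : E.length + W.length + F.length = n) :
    ∑ A ∈ dset E, ∑ C ∈ dset F, β (A ++ W ++ C)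
      = ∑ A ∈ dset E, ∑ C ∈ dset F, β (A ++ W ++ comp C) := by
  rcases hF with rfl | hF
  · simp [dset, comp]
  · obtain ⟨F', rfl⟩ : ∃ F', F = true :: F' := by
      cases F with
      | nil => simp at hF
      | cons a F' =>
        simp only [List.head?_cons, Option.some.injEq] at hF
        exact ⟨F', by rw [hF]⟩
    refine Finset.sum_congr rfl fun A hA => ?_
    rw [sum_dset_cons_true, sum_dset_cons_true]
    refine Finset.sum_congr rfl fun C hC => ?_
    have hAl := length_of_mem_dset _ _ hA
    have hCl := length_of_mem_dset _ _ hC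
    have key := beta_flip hβ (A ++ W) false C
      (by simp only [List.length_append, List.length_cons] at *; omega)
    simp only [List.append_assoc, List.singleton_append, Bool.not_false] at key
    simp only [show ∀ (c : Bool) (K : List Bool), comp (c :: K) = (!c) :: comp K
      from fun _ _ => rfl, Bool.not_false, Bool.not_true, List.append_assoc]
    linarith

lemma telescope (V : ℕ → ℚ) (j : ℕ) (hj : 1 ≤ j) :
    ∑ i ∈ Finset.Icc 1 j, (-1 : ℚ) ^ (i - 1) * (V i + V (i + 1))
      = V 1 + (-1 : ℚ) ^ (j - 1) * V (j + 1) := by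
  induction j with
  | zero => omega
  | succ j ih =>
    rcases Nat.lt_or_ge 1 (j + 1) with h | h
    · have hj' : 1 ≤ j := by omega
      rw [Finset.sum_Icc_succ_top (by omega : 1 ≤ j + 1), ih hj']
      have e1 : j + 1 - 1 = j := by omega
      have e2 : j = (j - 1) + 1 := by omega
      have hpow : ((-1 : ℚ)) ^ j = -(-1 : ℚ) ^ (j - 1) := by
        conv_lhs => rw [e2]
        rw [pow_succ]; ring
      rw [e1, hpow]; ring
    · have : j = 0 := by omega
      subst this
      simp

end Aux
theorem dualBB_implies_bayer_billera (n : ℕ) (hn : 1 ≤ n)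
    (β : List Bool → ℚ) (hβ : DualBB n β) (α : List Bool → ℚ)
    (hαβ : ∀ F : List Bool, F.length = n →
      α F = ∑ E ∈ (allWords n).filter (fun E => wleB E F), β E) :
    BB n α := by
  intro j E F hj hE hF hlen
  have hzlen : (zeros j).length = j := by simp [zeros]
  -- α as a triple sum
  have key : ∀ G : List Bool, G.length = j →
      α (E ++ G ++ F) = ∑ A ∈ dset E, ∑ B ∈ dset G, ∑ C ∈ dset F, β (A ++ B ++ C) := by
    intro G hG
    have hlen' : (E ++ G ++ F).length = n := by
      simp only [List.length_append]; omega
    rw [hαβ _ hlen', ← hlen', filter_wle, sum_dset_append (E ++ G) F,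
      sum_dset_append E G (fun P => ∑ C ∈ dset F, β (P ++ C))]
  -- the zero word value
  have hz_red : α (E ++ zeros j ++ F)
      = ∑ A ∈ dset E, ∑ C ∈ dset F, β (A ++ zeros j ++ C) := by
    rw [key (zeros j) hzlen]
    refine Finset.sum_congr rfl fun A _ => ?_
    exact sum_dset_rep j (fun B => ∑ C ∈ dset F, β (A ++ B ++ C))
  have hlz : E.length + (zeros j).length + F.length = n := by rw [hzlen]; omega
  -- the V sequence
  set V : ℕ → ℚ := fun i =>
    ∑ A ∈ dset E, ∑ C ∈ dset F,
      β (A ++ (zeros (i - 1) ++ ones (j + 1 - i)) ++ comp C) with hV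
  -- V 1 = T0
  have hV1 : V 1 = ∑ A ∈ dset E, ∑ C ∈ dset F, β (A ++ zeros j ++ C) := by
    have h := sum_left hβ E F (zeros j) hE hlz
    rw [comp_zeros] at h
    rw [hV]
    simp only [Nat.sub_self, Nat.add_sub_cancel]
    rw [show zeros 0 = ([] : List Bool) from rfl, List.nil_append]
    exact h.symm
  -- V (j+1) = T0
  have hVj1 : V (j + 1) = ∑ A ∈ dset E, ∑ C ∈ dset F, β (A ++ zeros j ++ C) := by
    have h := sum_right hβ E F (zeros j) hF hlz
    rw [hV]
    simp only [Nat.add_sub_cancel, Nat.sub_self]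
    rw [show ones 0 = ([] : List Bool) from rfl, List.append_nil]
    exact h.symm
  -- each term of the alternating sum
  have hstep : ∀ i ∈ Finset.Icc 1 j, α (E ++ Eij i j ++ F) = V i + V (i + 1) := by
    intro i hi
    rw [Finset.mem_Icc] at hi
    obtain ⟨hi1, hi2⟩ := hi
    have hElen : (Eij i j).length = j := by
      simp only [Eij, List.length_append, List.length_replicate, List.length_cons,
        List.length_nil]
      omega
    rw [key (Eij i j) hElen]
    have hmid : ∀ A ∈ dset E,
        (∑ B ∈ dset (Eij i j), ∑ C ∈ dset F, β (A ++ B ++ C))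
          = ∑ C ∈ dset F, β (A ++ zeros j ++ C) + ∑ C ∈ dset F, β (A ++ Eij i j ++ C) := by
      intro A _
      exact sum_dset_Eij i j hi1 hi2 (fun B => ∑ C ∈ dset F, β (A ++ B ++ C))
    rw [Finset.sum_congr rfl hmid, hV]
    simp only [Nat.add_sub_cancel, Nat.succ_sub_succ, Nat.sub_zero]
    rw [← Finset.sum_add_distrib]
    refine Finset.sum_congr rfl fun A hA => ?_
    rw [← Finset.sum_add_distrib, ← Finset.sum_add_distrib]
    refine Finset.sum_congr rfl fun C hC => ?_
    have hAl := length_of_mem_dset _ _ hA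
    have hCl := length_of_mem_dset _ _ hC
    have keyf := beta_flip hβ (A ++ zeros (i - 1)) true (zeros (j - i) ++ C)
      (by simp only [List.length_append, List.length_cons, zeros, List.length_replicate] at *
          omega)
    rw [comp_append, comp_zeros] at keyf
    have hzsplit : zeros (i - 1) ++ ([false] ++ zeros (j - i)) = zeros j := by
      simp only [zeros]
      conv_rhs => rw [show j = (i - 1) + (1 + (j - i)) from by omega, List.replicate_add,
        List.replicate_add]
      rfl
    have honesplit : ([true] : List Bool) ++ ones (j - i) = ones (j + 1 - i) := by
      simp only [ones]
      conv_rhs => rw [show j + 1 - i = 1 + (j - i) from by omega, List.replicate_add]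
      rfl
    have hzsplit2 : zeros (i - 1) ++ [false] = zeros i := by
      simp only [zeros]
      conv_rhs => rw [show i = (i - 1) + 1 from by omega, List.replicate_add]
      rfl
    have e1 : A ++ zeros (i - 1) ++ [true] ++ (zeros (j - i) ++ C) = A ++ Eij i j ++ C := by
      simp [Eij, zeros, List.append_assoc]
    have e2 : A ++ zeros (i - 1) ++ [false] ++ (zeros (j - i) ++ C)
        = A ++ zeros j ++ C := by
      rw [← hzsplit]; simp [List.append_assoc]
    have e3 : A ++ zeros (i - 1) ++ [true] ++ (ones (j - i) ++ comp C)
        = A ++ (zeros (i - 1) ++ ones (j + 1 - i)) ++ comp C := by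
      rw [← honesplit]; simp [List.append_assoc]
    have e4 : A ++ zeros (i - 1) ++ [false] ++ (ones (j - i) ++ comp C)
        = A ++ (zeros i ++ ones (j - i)) ++ comp C := by
      rw [← hzsplit2]; simp [List.append_assoc]
    simp only [Bool.not_true] at keyf
    rw [e1, e2, e3, e4] at keyf
    linarith
  -- assemble
  calc ∑ i ∈ Finset.Icc 1 j, (-1 : ℚ) ^ (i - 1) * α (E ++ Eij i j ++ F)
      = ∑ i ∈ Finset.Icc 1 j, (-1 : ℚ) ^ (i - 1) * (V i + V (i + 1)) :=
        Finset.sum_congr rfl fun i hi => by rw [hstep i hi]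
    _ = V 1 + (-1 : ℚ) ^ (j - 1) * V (j + 1) := telescope V j hj
    _ = 2 * (if Odd j then 1 else 0) * α (E ++ zeros j ++ F) := by
        rw [hV1, hVj1, hz_red]
        rcases Nat.even_or_odd j with he | ho
        · have hno : ¬ Odd j := by simpa [Nat.not_odd_iff_even] using he
          have hodd : Odd (j - 1) := by
            rw [Nat.odd_iff]; rw [Nat.even_iff] at he; omega
          rw [if_neg hno, hodd.neg_one_pow]
          ring
        · have hev : Even (j - 1) := by
            rw [Nat.even_iff]; rw [Nat.odd_iff] at ho; omega
          rw [if_pos ho, hev.neg_one_pow]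
          ring
end

section
/- Let n ≥ 2 and let E and T be sparse 0-1 words of length n−1. Then h_{E,T} = 1 if E = T, and h_{E,T} = 0 otherwise. (Equivalently, the only sparse word in G(T) is T itself, with sign +1; this is the key step showing the D_T with T sparse are linearly independent.) -/
/-- `S(T)`: the set of (1-indexed) positions of the 1's of the word `T`. -/
def onesSet (T : List Bool) : Finset ℕ :=
  ((Finset.range T.length).filter (fun i => T.getD i false = true)).image (· + 1)

/-- The increasing list `s_1 < ⋯ < s_t` of positions of the 1's of `T`. -/
def sListOf (T : List Bool) : List ℕ := (onesSet T).sort (· ≤ ·)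

/-- `sfun n T j = s_j`, with the conventions `s_0 = 0` and `s_j = n` for `j > t`. -/
def sfun (n : ℕ) (T : List Bool) (j : ℕ) : ℕ :=
  if j = 0 then 0 else (sListOf T).getD (j - 1) n

/-- `tOf T = t`, the number of 1's of `T`. -/
def tOf (T : List Bool) : ℕ := (onesSet T).card

/-- `S ∩ (s_j, s_{j+1})`, the elements of `S` lying strictly between `s_j` and `s_{j+1}`. -/
def intv (n : ℕ) (T : List Bool) (S : Finset ℕ) (j : ℕ) : Finset ℕ :=
  S.filter (fun x => sfun n T j < x ∧ x < sfun n T (j + 1))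

/-- `S ∈ G(T)`: every interval `(s_j, s_{j+1})` with `0 ≤ j ≤ t-1` meets `S`, and any two
elements of `S` in a common interval `(s_j, s_{j+1})`, `0 ≤ j ≤ t`, are congruent mod 2. -/
def memG (n : ℕ) (T : List Bool) (S : Finset ℕ) : Prop :=
  (∀ j < tOf T, (intv n T S j).Nonempty) ∧
    (∀ j ≤ tOf T, ∀ x ∈ intv n T S j, ∀ y ∈ intv n T S j, x % 2 = y % 2)

/-- `sgn(S,T) = (-1)^(Σ_{j=0}^{t-1} (s_{j+1} - y_j - 1))`, with `y_j` the least element of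
`S ∩ (s_j, s_{j+1})` (any choice gives the same value when `S ∈ G(T)`). -/
noncomputable def sgnST (n : ℕ) (T : List Bool) (S : Finset ℕ) : ℚ :=
  (-1 : ℚ) ^ (∑ j ∈ Finset.range (tOf T),
    (sfun n T (j + 1) - WithTop.untopD 0 (intv n T S j).min - 1))

/-- `h_{S,T}`. -/
noncomputable def hST (n : ℕ) (T : List Bool) (S : Finset ℕ) : ℚ :=
  haveI := Classical.propDecidable (memG n T S)
  if memG n T S then sgnST n T S else 0

/-- `∂(E) = {i ∈ [m-1] : E_i ≠ E_{i+1}} ∪ {m}` for a word `E` of length `m` (1-indexed). -/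
def bnd (E : List Bool) : Finset ℕ :=
  ((Finset.Icc 1 (E.length - 1)).filter
      (fun i => E.getD (i - 1) false ≠ E.getD i false)) ∪ {E.length}

/-- A word is sparse if it does not begin with a 1 and has no two consecutive 1's. -/
def Sparse (E : List Bool) : Prop :=
  E.head? ≠ some true ∧ E.Chain' (fun a b => ¬(a = true ∧ b = true))

lemma mem_onesSet {T : List Bool} {x : ℕ} :
    x ∈ onesSet T ↔ 1 ≤ x ∧ x ≤ T.length ∧ T.getD (x-1) false = true := by
  simp only [onesSet, Finset.mem_image, Finset.mem_filter, Finset.mem_range]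
  constructor
  · rintro ⟨i, ⟨hi, h⟩, rfl⟩
    exact ⟨by omega, by omega, by simpa using h⟩
  · rintro ⟨h1, h2, h3⟩
    exact ⟨x - 1, ⟨by omega, h3⟩, by omega⟩

lemma sparse_getD_zero {E : List Bool} (h : Sparse E) : E.getD 0 false ≠ true := by
  cases E with
  | nil => simp
  | cons a l =>
    intro hc
    rw [List.getD_cons_zero] at hc
    exact h.1 (by rw [hc]; rfl)

lemma sparse_no_consec {E : List Bool} (h : Sparse E) {i : ℕ}
    (h1 : E.getD i false = true) (h2 : E.getD (i+1) false = true) : False := by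
  by_cases hlen : i + 1 < E.length
  · have hc := List.isChain_iff_getElem.mp h.2 i (by omega)
    rw [List.getD_eq_getElem _ _ (by omega)] at h1
    rw [List.getD_eq_getElem _ _ hlen] at h2
    exact hc ⟨by simpa using h1, by simpa using h2⟩
  · rw [List.getD_eq_default _ _ (by omega)] at h2
    simp at h2

lemma onesSet_two_le {E : List Bool} (h : Sparse E) {x : ℕ} (hx : x ∈ onesSet E) : 2 ≤ x := by
  rw [mem_onesSet] at hx
  rcases hx with ⟨h1, h2, h3⟩
  rcases (by omega : x = 1 ∨ 2 ≤ x) with rfl | h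
  · exact absurd h3 (by simpa using sparse_getD_zero h)
  · exact h

lemma onesSet_gap {E : List Bool} (h : Sparse E) {x : ℕ} (hx : x ∈ onesSet E) :
    x + 1 ∉ onesSet E := by
  intro hy
  rw [mem_onesSet] at hx hy
  have hx' := hx.2.2
  have hy' := hy.2.2
  have he : x + 1 - 1 = (x-1)+1 := by omega
  rw [he] at hy'
  exact sparse_no_consec h hx' hy'

lemma sList_length (T : List Bool) : (sListOf T).length = tOf T := Finset.length_sort _

lemma sList_sorted (T : List Bool) : (sListOf T).Pairwise (· < ·) := (Finset.sortedLT_sort _).pairwise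

lemma mem_sList {T : List Bool} {x : ℕ} : x ∈ sListOf T ↔ x ∈ onesSet T := Finset.mem_sort _

lemma sfun_zero (n : ℕ) (T : List Bool) : sfun n T 0 = 0 := rfl

lemma sfun_mem {n : ℕ} {T : List Bool} {j : ℕ} (h1 : 1 ≤ j) (h2 : j ≤ tOf T) :
    sfun n T j ∈ onesSet T := by
  rw [sfun, if_neg (by omega),
    List.getD_eq_getElem _ _ (by rw [sList_length]; omega), ← mem_sList]
  exact List.getElem_mem _

lemma sfun_eq_of_gt {n : ℕ} {T : List Bool} {j : ℕ} (h : tOf T < j) : sfun n T j = n := by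
  rw [sfun, if_neg (by omega), List.getD_eq_default]
  rw [sList_length]; omega

lemma sfun_le {n : ℕ} {T : List Bool} {j : ℕ} (h : j ≤ tOf T) : sfun n T j ≤ T.length := by
  rcases Nat.eq_zero_or_pos j with rfl | hpos
  · simp [sfun_zero]
  · exact (mem_onesSet.mp (sfun_mem hpos h)).2.1

lemma sfun_lt_succ {n : ℕ} {T : List Bool} (hlen : T.length < n) {j : ℕ} (hj : j ≤ tOf T) :
    sfun n T j < sfun n T (j+1) := by
  by_cases ht : j = tOf T
  · subst ht
    have he : sfun n T (tOf T + 1) = n := sfun_eq_of_gt (by omega)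
    rw [he]
    exact lt_of_le_of_lt (sfun_le le_rfl) hlen
  · have hjt : j < tOf T := by omega
    have hmem : sfun n T (j+1) ∈ onesSet T := sfun_mem (by omega) (by omega)
    rcases Nat.eq_zero_or_pos j with rfl | hpos
    · rw [sfun_zero]
      have := (mem_onesSet.mp hmem).1; omega
    · rw [sfun, if_neg (by omega), sfun, if_neg (by omega)]
      rw [List.getD_eq_getElem _ _ (by rw [sList_length]; omega),
          List.getD_eq_getElem _ _ (by rw [sList_length]; omega)]
      exact List.pairwise_iff_getElem.mp (sList_sorted T) _ _ _ _ (by omega)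

lemma not_mem_between {n : ℕ} {T : List Bool} {j x : ℕ} (hj : j ≤ tOf T)
    (hx : x ∈ onesSet T) (h1 : sfun n T j < x) (h2 : x < sfun n T (j+1)) : False := by
  rw [← mem_sList] at hx
  obtain ⟨i, hi, rfl⟩ := List.getElem_of_mem hx
  have hlen := sList_length T
  have hsort := sList_sorted T
  -- first : i ≥ j
  have hij : j ≤ i := by
    by_contra hc
    push_neg at hc
    -- i ≤ j - 1, so l[i] ≤ l[j-1] = sfun n T j
    have h1' : 1 ≤ j := by omega
    have : (sListOf T)[i] ≤ (sListOf T)[j-1]'(by omega) := by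
      rcases (by omega : i = j - 1 ∨ i < j - 1) with h | h
      · exact le_of_eq (by congr 1)
      · exact le_of_lt (List.pairwise_iff_getElem.mp hsort _ _ _ _ h)
    rw [sfun, if_neg (by omega), List.getD_eq_getElem _ _ (by omega)] at h1
    omega
  have hjt : j < tOf T := by omega
  have : sfun n T (j+1) ≤ (sListOf T)[i] := by
    rw [sfun, if_neg (by omega), List.getD_eq_getElem _ _ (by simp; omega)]
    rcases (by omega : j = i ∨ j < i) with h | h
    · exact le_of_eq (by congr 1)
    · exact le_of_lt (List.pairwise_iff_getElem.mp hsort _ _ _ _ h)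
  omega

lemma mem_intv {n : ℕ} {T : List Bool} {S : Finset ℕ} {j x : ℕ} :
    x ∈ intv n T S j ↔ x ∈ S ∧ sfun n T j < x ∧ x < sfun n T (j+1) := by
  simp [intv, Finset.mem_filter]

lemma mem_bnd {E : List Bool} {i : ℕ} :
    i ∈ bnd E ↔ (1 ≤ i ∧ i ≤ E.length - 1 ∧ E.getD (i-1) false ≠ E.getD i false)
      ∨ i = E.length := by
  simp only [bnd, Finset.mem_union, Finset.mem_filter, Finset.mem_Icc, Finset.mem_singleton,
    and_assoc]

lemma mem_bnd_sparse {E : List Bool} (hE : Sparse E) {i : ℕ} :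
    i ∈ bnd E ↔ i = E.length ∨ (i ∈ onesSet E ∧ i < E.length) ∨ (i + 1) ∈ onesSet E := by
  rw [mem_bnd]
  constructor
  · rintro (⟨h1, h2, h3⟩ | h)
    · cases hb : E.getD i false with
      | true =>
        right; right
        rw [mem_onesSet]
        exact ⟨by omega, by omega, by simpa using hb⟩
      | false =>
        right; left
        have hb1 : E.getD (i-1) false = true := by
          cases hb1 : E.getD (i-1) false
          · rw [hb, hb1] at h3; exact absurd rfl h3
          · rfl
        exact ⟨mem_onesSet.mpr ⟨h1, by omega, hb1⟩, by omega⟩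
    · exact Or.inl h
  · rintro (h | ⟨h, hlt⟩ | h)
    · right; exact h
    · left
      rw [mem_onesSet] at h
      obtain ⟨h1, h2, h3⟩ := h
      refine ⟨h1, by omega, ?_⟩
      have hb : E.getD i false = false := by
        cases hb : E.getD i false
        · rfl
        · exfalso
          have : E.getD ((i-1)+1) false = true := by
            have : (i-1)+1 = i := by omega
            rw [this]; exact hb
          exact sparse_no_consec hE h3 this
      rw [h3, hb]; simp
    · left
      rw [mem_onesSet] at h
      obtain ⟨h1, h2, h3⟩ := h
      have h3' : E.getD i false = true := by simpa using h3
      have hi1 : 1 ≤ i := by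
        by_contra hc
        have : i = 0 := by omega
        rw [this] at h3'
        exact sparse_getD_zero hE h3'
      refine ⟨hi1, by omega, ?_⟩
      have hb : E.getD (i-1) false = false := by
        cases hb : E.getD (i-1) false
        · rfl
        · exfalso
          have he : (i-1)+1 = i := by omega
          exact sparse_no_consec hE hb (by rw [he]; exact h3')
      rw [hb, h3']; simp

lemma onesSet_mem_bnd {E : List Bool} (hE : Sparse E) {y : ℕ} (hy : y ∈ onesSet E) :
    y ∈ bnd E ∧ y - 1 ∈ bnd E := by
  have h2 := onesSet_two_le hE hy
  have hle := (mem_onesSet.mp hy).2.1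
  constructor
  · rw [mem_bnd_sparse hE]
    rcases (by omega : y = E.length ∨ y < E.length) with h | h
    · exact Or.inl h
    · exact Or.inr (Or.inl ⟨hy, h⟩)
  · rw [mem_bnd_sparse hE]
    right; right
    have : y - 1 + 1 = y := by omega
    rw [this]; exact hy

lemma key_no_inner {n : ℕ} {E T : List Bool} (hE : E.length = n - 1)
    (hEs : Sparse E) {j : ℕ} (hj : j ≤ tOf T)
    (hpar : ∀ x ∈ intv n T (bnd E) j, ∀ y ∈ intv n T (bnd E) j, x % 2 = y % 2)
    (hprev : j = 0 ∨ sfun n T j ∈ onesSet E)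
    {y : ℕ} (hy : y ∈ onesSet E) (h1 : sfun n T j < y) (h2 : y < sfun n T (j+1)) : False := by
  have h2y : 2 ≤ y := onesSet_two_le hEs hy
  have hgap : sfun n T j + 2 ≤ y := by
    rcases hprev with h0 | hmem
    · rw [h0, sfun_zero]; omega
    · rcases (by omega : y = sfun n T j + 1 ∨ sfun n T j + 2 ≤ y) with h | h
      · exact absurd (h ▸ hy) (onesSet_gap hEs hmem)
      · exact h
  obtain ⟨hb1, hb2⟩ := onesSet_mem_bnd hEs hy
  have hy1 : y - 1 ∈ intv n T (bnd E) j := mem_intv.mpr ⟨hb2, by omega, by omega⟩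
  have hy2 : y ∈ intv n T (bnd E) j := mem_intv.mpr ⟨hb1, by omega, by omega⟩
  have := hpar _ hy1 _ hy2
  omega

lemma claimC {n : ℕ} {E T : List Bool} (hn : 2 ≤ n) (hE : E.length = n-1) (hT : T.length = n-1)
    (hEs : Sparse E) (hmem : memG n T (bnd E)) :
    ∀ j, j ≤ tOf T → ∀ x, x ≤ sfun n T j → (x ∈ onesSet E ↔ x ∈ onesSet T) := by
  intro j
  induction j with
  | zero =>
    intro _ x hx
    rw [sfun_zero] at hx
    have hx0 : x = 0 := by omega
    subst hx0
    constructor <;> intro h <;> exact absurd (mem_onesSet.mp h).1 (by omega)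
  | succ j ih =>
    intro hj1 x hx
    have hj : j ≤ tOf T := by omega
    have ihj := ih hj
    have hprev : j = 0 ∨ sfun n T j ∈ onesSet E := by
      rcases Nat.eq_zero_or_pos j with h0 | hpos
      · exact Or.inl h0
      · exact Or.inr ((ihj _ le_rfl).mpr (sfun_mem hpos hj))
    have hpar := hmem.2 j hj
    have hnoinner : ∀ y ∈ onesSet E, ¬(sfun n T j < y ∧ y < sfun n T (j+1)) :=
      fun y hy hc => key_no_inner hE hEs hj hpar hprev hy hc.1 hc.2
    have hjt : j < tOf T := by omega
    have hstep : sfun n T (j+1) ∈ onesSet E := by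
      obtain ⟨z, hz⟩ := hmem.1 j hjt
      rw [mem_intv] at hz
      obtain ⟨hzb, hz1, hz2⟩ := hz
      rw [mem_bnd_sparse hEs] at hzb
      have hsucc_le : sfun n T (j+1) ≤ T.length := sfun_le hj1
      rcases hzb with h | ⟨h, _⟩ | h
      · omega
      · exact absurd ⟨hz1, hz2⟩ (hnoinner z h)
      · rcases (by omega : z + 1 < sfun n T (j+1) ∨ z + 1 = sfun n T (j+1)) with hlt | heq
        · exact absurd ⟨by omega, hlt⟩ (hnoinner _ h)
        · rw [← heq]; exact h
    rcases (by omega : x ≤ sfun n T j ∨ (sfun n T j < x ∧ x < sfun n T (j+1))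
        ∨ x = sfun n T (j+1)) with h | h | h
    · exact ihj x h
    · exact iff_of_false (fun hxE => hnoinner x hxE h)
        (fun hxT => not_mem_between hj hxT h.1 h.2)
    · subst h
      exact iff_of_true hstep (sfun_mem (by omega) hj1)

lemma eq_of_memG {n : ℕ} {E T : List Bool} (hn : 2 ≤ n) (hE : E.length = n-1)
    (hT : T.length = n-1) (hEs : Sparse E) (hmem : memG n T (bnd E)) : E = T := by
  have hC := claimC hn hE hT hEs hmem (tOf T) le_rfl
  have hsets : onesSet E = onesSet T := by
    ext x
    rcases le_or_gt x (sfun n T (tOf T)) with h | h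
    · exact hC x h
    · have hprev : tOf T = 0 ∨ sfun n T (tOf T) ∈ onesSet E := by
        rcases Nat.eq_zero_or_pos (tOf T) with h0 | hpos
        · exact Or.inl h0
        · exact Or.inr ((hC _ le_rfl).mpr (sfun_mem hpos le_rfl))
      have hsucc : sfun n T (tOf T + 1) = n := sfun_eq_of_gt (by omega)
      apply iff_of_false
      · intro hxE
        have hxlt := (mem_onesSet.mp hxE).2.1
        exact key_no_inner hE hEs le_rfl (hmem.2 _ le_rfl) hprev hxE h (by omega)
      · intro hxT
        have hxlt := (mem_onesSet.mp hxT).2.1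
        exact not_mem_between le_rfl hxT h (by omega)
  apply List.ext_getElem (by omega)
  intro i h1 h2
  have hiff : (i+1 ∈ onesSet E) ↔ (i+1 ∈ onesSet T) := by rw [hsets]
  rw [mem_onesSet, mem_onesSet] at hiff
  simp only [Nat.add_sub_cancel] at hiff
  have hE' : E.getD i false = E[i] := List.getD_eq_getElem _ _ h1
  have hT' : T.getD i false = T[i] := List.getD_eq_getElem _ _ h2
  have hiff2 : E.getD i false = true ↔ T.getD i false = true := by
    constructor
    · intro hb; exact (hiff.mp ⟨by omega, by omega, hb⟩).2.2
    · intro hb; exact (hiff.mpr ⟨by omega, by omega, hb⟩).2.2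
  rw [hE', hT'] at hiff2
  cases hb1 : E[i] <;> cases hb2 : T[i] <;> simp_all

lemma sfun_gap {n : ℕ} {T : List Bool} (hTs : Sparse T) (hlen : T.length < n) {j : ℕ}
    (hj : j < tOf T) : sfun n T j + 2 ≤ sfun n T (j+1) := by
  have hmem : sfun n T (j+1) ∈ onesSet T := sfun_mem (by omega) (by omega)
  rcases Nat.eq_zero_or_pos j with h0 | hpos
  · subst h0
    rw [sfun_zero]
    have := onesSet_two_le hTs hmem
    omega
  · have hmemj : sfun n T j ∈ onesSet T := sfun_mem hpos (by omega)
    have hlt : sfun n T j < sfun n T (j+1) := sfun_lt_succ hlen (by omega)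
    rcases (by omega : sfun n T (j+1) = sfun n T j + 1
        ∨ sfun n T j + 2 ≤ sfun n T (j+1)) with h | h
    · exact absurd (h ▸ hmem) (onesSet_gap hTs hmemj)
    · exact h

lemma intv_bndT_eq {n : ℕ} {T : List Bool} (hn : 2 ≤ n) (hT : T.length = n-1) (hTs : Sparse T)
    {j x : ℕ} (hj : j ≤ tOf T) (hx : x ∈ intv n T (bnd T) j) : x = sfun n T (j+1) - 1 := by
  rw [mem_intv] at hx
  obtain ⟨hxb, h1, h2⟩ := hx
  rw [mem_bnd_sparse hTs] at hxb
  rcases hxb with h | ⟨h, _⟩ | h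
  · rcases (by omega : j = tOf T ∨ j + 1 ≤ tOf T) with hjt | hj1
    · have he : sfun n T (j + 1) = n := sfun_eq_of_gt (by omega)
      omega
    · have h5 : sfun n T (j+1) ≤ T.length := sfun_le hj1
      omega
  · exact (not_mem_between hj h h1 h2).elim
  · rcases (by omega : x + 1 < sfun n T (j+1) ∨ x + 1 = sfun n T (j+1)) with hlt | heq
    · exact (not_mem_between hj h (by omega) hlt).elim
    · omega

lemma intv_bndT_mem {n : ℕ} (hn : 2 ≤ n) {T : List Bool} (hT : T.length = n-1) (hTs : Sparse T)
    {j : ℕ} (hj : j < tOf T) : sfun n T (j+1) - 1 ∈ intv n T (bnd T) j := by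
  have hmem : sfun n T (j+1) ∈ onesSet T := sfun_mem (by omega) (by omega)
  have hgap := sfun_gap (n := n) hTs (by omega) hj
  have h2 := onesSet_two_le hTs hmem
  exact mem_intv.mpr ⟨(onesSet_mem_bnd hTs hmem).2, by omega, by omega⟩

lemma memG_bndT {n : ℕ} (hn : 2 ≤ n) {T : List Bool} (hT : T.length = n-1) (hTs : Sparse T) :
    memG n T (bnd T) := by
  constructor
  · intro j hj
    exact ⟨_, intv_bndT_mem hn hT hTs hj⟩
  · intro j hj x hx y hy
    rw [intv_bndT_eq hn hT hTs hj hx, intv_bndT_eq hn hT hTs hj hy]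

lemma sgnST_bndT {n : ℕ} (hn : 2 ≤ n) {T : List Bool} (hT : T.length = n-1) (hTs : Sparse T) :
    sgnST n T (bnd T) = 1 := by
  rw [sgnST]
  have hsum : (∑ j ∈ Finset.range (tOf T),
      (sfun n T (j + 1) - WithTop.untopD 0 (intv n T (bnd T) j).min - 1)) = 0 := by
    apply Finset.sum_eq_zero
    intro j hj
    rw [Finset.mem_range] at hj
    have hset : intv n T (bnd T) j = {sfun n T (j+1) - 1} :=
      Finset.eq_singleton_iff_unique_mem.mpr
        ⟨intv_bndT_mem hn hT hTs hj, fun x hx => intv_bndT_eq hn hT hTs (le_of_lt hj) hx⟩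
    rw [hset, Finset.min_singleton, WithTop.untopD_coe]
    have hge : 2 ≤ sfun n T (j+1) := onesSet_two_le hTs (sfun_mem (by omega) (by omega))
    omega
  rw [hsum, pow_zero]

theorem hST_sparse_delta (n : ℕ) (hn : 2 ≤ n) (E T : List Bool)
    (hE : E.length = n - 1) (hT : T.length = n - 1)
    (hEs : Sparse E) (hTs : Sparse T) :
    hST n T (bnd E) = if E = T then 1 else 0 := by
  by_cases heq : E = T
  · subst heq
    rw [if_pos rfl]
    unfold hST
    rw [if_pos (memG_bndT hn hT hTs)]
    exact sgnST_bndT hn hT hTs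
  · rw [if_neg heq]
    unfold hST
    rw [if_neg (fun hm => heq (eq_of_memG hn hE hT hEs hm))]
end
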